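/- Every cubic space (W,S) over k with dim_k W ≤ ℵ₀ admits an embedding of cubic spaces W → V(∞). -/

import Mathlib

open scoped BigOperators

/-- The trilinear form on `ι →₀ k` with coefficients `c` relative to the standard basis:
`(x, y, z) ↦ ∑ u v w, x u • (y v • (z w • c u v w))`. -/
noncomputable def triBasis (k : Type*) [Field k] {ι : Type*} (c : ι → ι → ι → k) :
    (ι →₀ k) →ₗ[k] (ι →₀ k) →ₗ[k] (ι →₀ k) →ₗ[k] k :=
  Finsupp.lsum k fun u => LinearMap.toSpanSingleton k _ <|
    Finsupp.lsum k fun v => LinearMap.toSpanSingleton k _ <|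
      Finsupp.lsum k fun w => LinearMap.toSpanSingleton k k (c u v w)

/-- Pullback of a trilinear form along a linear map: `comp3 T f x y z = T (f x) (f y) (f z)`. -/
noncomputable def comp3 {k A B : Type*} [Field k] [AddCommGroup A] [Module k A]
    [AddCommGroup B] [Module k B]
    (T : B →ₗ[k] B →ₗ[k] B →ₗ[k] k) (f : A →ₗ[k] B) :
    A →ₗ[k] A →ₗ[k] A →ₗ[k] k where
  toFun a := (T (f a)).compl₁₂ f f
  map_add' a a' := by ext x y; simp [LinearMap.compl₁₂_apply, map_add]
  map_smul' c a := by ext x y; simp [LinearMap.compl₁₂_apply, map_smul]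

/-- The underlying vector space of `V(∞)`: pairs of finitely supported functions. -/
abbrev VInf (k : Type*) [Field k] := (ℕ →₀ k) × ((ℕ × ℕ) →₀ k)

/-- `gInf u v w` is `1` exactly when `u = inl i` and `v = w = inr (i,j)` for some `i, j`. -/
def gInf (k : Type*) [Field k] : (ℕ ⊕ ℕ × ℕ) → (ℕ ⊕ ℕ × ℕ) → (ℕ ⊕ ℕ × ℕ) → k
  | Sum.inl i, Sum.inr p, Sum.inr q => if p = q ∧ p.1 = i then 1 else 0
  | _, _, _ => 0

/-- Coefficients of the symmetric trilinear form `T∞` relative to the standard basis of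
`(ℕ ⊕ ℕ × ℕ) →₀ k` (basis vectors indexed by `inl i` are the `x_i` coordinates, those
indexed by `inr (i,j)` the `y_{i,j}` coordinates). -/
def cInf (k : Type*) [Field k] (u v w : ℕ ⊕ ℕ × ℕ) : k :=
  gInf k u v w + gInf k v u w + gInf k w u v

/-- The identification of `V(∞)` with finitely supported functions on `ℕ ⊕ ℕ × ℕ`,
sending `(a, b)` to the function equal to `a` on `inl` and to `b` on `inr`. -/
noncomputable def eInf (k : Type*) [Field k] : VInf k →ₗ[k] ((ℕ ⊕ ℕ × ℕ) →₀ k) :=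
  (Finsupp.sumFinsuppLEquivProdFinsupp k).symm.toLinearMap

/-- The symmetric trilinear form `T∞` of the cubic space `V(∞)`:
`T∞((a,b),(a',b'),(a'',b'')) = ∑ i j, (a i * b' (i,j) * b'' (i,j)
  + a' i * b (i,j) * b'' (i,j) + a'' i * b (i,j) * b' (i,j))`,
whose associated cubic form is `F∞(a,b) = 3 * ∑ i, a i * (∑ j, (b (i,j))^2)`. -/
noncomputable def TInf (k : Type*) [Field k] :
    VInf k →ₗ[k] VInf k →ₗ[k] VInf k →ₗ[k] k :=
  comp3 (triBasis k (cInf k)) (eInf k)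


/-! ### Auxiliary development -/

section Aux

variable {k : Type*} [Field k]

section TriBasis
variable {ι : Type*}

theorem triBasis_apply (c : ι → ι → ι → k) (x y z : ι →₀ k) :
    triBasis k c x y z =
      ∑ u ∈ x.support, ∑ v ∈ y.support, ∑ w ∈ z.support,
        x u * (y v * (z w * c u v w)) := by
  simp [triBasis, Finsupp.lsum_apply, Finsupp.sum_apply', Finsupp.sum,
    LinearMap.toSpanSingleton_apply, Finset.sum_apply', smul_eq_mul,
    Finset.mul_sum]

theorem triBasis_apply_superset (c : ι → ι → ι → k) {x y z : ι →₀ k}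
    {Sx Sy Sz : Finset ι} (hx : x.support ⊆ Sx) (hy : y.support ⊆ Sy)
    (hz : z.support ⊆ Sz) :
    triBasis k c x y z =
      ∑ u ∈ Sx, ∑ v ∈ Sy, ∑ w ∈ Sz, x u * (y v * (z w * c u v w)) := by
  rw [triBasis_apply]
  refine Finset.sum_subset hx (fun u _ hu => ?_) |>.trans
    (Finset.sum_congr rfl fun u _ => ?_)
  · simp [Finsupp.notMem_support_iff.1 hu]
  refine Finset.sum_subset hy (fun v _ hv => ?_) |>.trans
    (Finset.sum_congr rfl fun v _ => ?_)
  · simp [Finsupp.notMem_support_iff.1 hv]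
  refine Finset.sum_subset hz (fun w _ hw => ?_)
  · simp [Finsupp.notMem_support_iff.1 hw]

theorem triBasis_single (c : ι → ι → ι → k) (u v w : ι) (r s t : k) :
    triBasis k c (Finsupp.single u r) (Finsupp.single v s) (Finsupp.single w t)
      = r * (s * (t * c u v w)) := by
  rcases eq_or_ne r 0 with rfl | hr
  · simp
  rcases eq_or_ne s 0 with rfl | hs
  · simp
  rcases eq_or_ne t 0 with rfl | ht
  · simp
  rw [triBasis_apply_superset c (Finsupp.support_single_subset)
      (Finsupp.support_single_subset) (Finsupp.support_single_subset)]
  simp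

theorem triBasis_swap12 {c : ι → ι → ι → k} (h : ∀ u v w, c u v w = c v u w)
    (x y z : ι →₀ k) : triBasis k c x y z = triBasis k c y x z := by
  rw [triBasis_apply, triBasis_apply, Finset.sum_comm]
  refine Finset.sum_congr rfl fun v _ => Finset.sum_congr rfl fun u _ =>
    Finset.sum_congr rfl fun w _ => ?_
  rw [h u v w]; ring

theorem triBasis_swap23 {c : ι → ι → ι → k} (h : ∀ u v w, c u v w = c u w v)
    (x y z : ι →₀ k) : triBasis k c x y z = triBasis k c x z y := by
  rw [triBasis_apply, triBasis_apply]
  refine Finset.sum_congr rfl fun u _ => ?_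
  rw [Finset.sum_comm]
  refine Finset.sum_congr rfl fun w _ => Finset.sum_congr rfl fun v _ => ?_
  rw [h u v w]; ring

end TriBasis

section Dot

/-- dot product of finitely supported sequences -/
noncomputable def dotF (x y : ℕ →₀ k) : k := x.sum fun j a => a * y j

theorem dotF_zero_left (y : ℕ →₀ k) : dotF 0 y = 0 := Finsupp.sum_zero_index

theorem dotF_zero_right (x : ℕ →₀ k) : dotF x 0 = 0 := by simp [dotF]

theorem dotF_single (j : ℕ) (a : k) (y : ℕ →₀ k) :
    dotF (Finsupp.single j a) y = a * y j :=
  Finsupp.sum_single_index (by simp)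

theorem dotF_add_left (x x' y : ℕ →₀ k) :
    dotF (x + x') y = dotF x y + dotF x' y :=
  Finsupp.sum_add_index' (by simp) (by intros; ring)

theorem dotF_sum_left {α : Type*} (s : Finset α) (f : α → (ℕ →₀ k)) (y : ℕ →₀ k) :
    dotF (∑ i ∈ s, f i) y = ∑ i ∈ s, dotF (f i) y := by
  classical
  induction s using Finset.induction_on with
  | empty => simp [dotF]
  | insert a s h ih => rw [Finset.sum_insert h, dotF_add_left, ih, Finset.sum_insert h]

theorem dotF_eq_sum_superset {x : ℕ →₀ k} {s : Finset ℕ} (h : x.support ⊆ s)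
    (y : ℕ →₀ k) : dotF x y = ∑ j ∈ s, x j * y j := by
  rw [dotF, Finsupp.sum]
  exact Finset.sum_subset h fun j _ hj => by
    simp [Finsupp.notMem_support_iff.1 hj]

theorem dotF_comm (x y : ℕ →₀ k) : dotF x y = dotF y x := by
  rw [dotF_eq_sum_superset (Finset.subset_union_left (s₂ := y.support)) y,
    dotF_eq_sum_superset (Finset.subset_union_right (s₁ := x.support)) x]
  exact Finset.sum_congr rfl fun j _ => mul_comm _ _

end Dot

section CInfLemmas

theorem cInf_inl_inl (a b : ℕ) (w : ℕ ⊕ ℕ × ℕ) :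
    cInf k (Sum.inl a) (Sum.inl b) w = 0 := by
  rcases w with i | p <;> simp [cInf, gInf]

theorem cInf_inr_inr_inr (p q r : ℕ × ℕ) :
    cInf k (Sum.inr p) (Sum.inr q) (Sum.inr r) = 0 := by
  simp [cInf, gInf]

theorem cInf_inl_inr_inr (a : ℕ) (p q : ℕ × ℕ) :
    cInf k (Sum.inl a) (Sum.inr p) (Sum.inr q)
      = if p = q ∧ p.1 = a then 1 else 0 := by
  simp [cInf, gInf]

set_option linter.unnecessarySeqFocus false in
theorem cInf_swap12 (u v w : ℕ ⊕ ℕ × ℕ) : cInf k u v w = cInf k v u w := by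
  rcases u with a | p <;> rcases v with b | q <;> rcases w with d | r <;>
    simp [cInf, gInf] <;>
  · refine if_congr ⟨?_, ?_⟩ rfl rfl <;> (rintro ⟨rfl, rfl⟩; exact ⟨rfl, rfl⟩)

set_option linter.unnecessarySeqFocus false in
theorem cInf_swap23 (u v w : ℕ ⊕ ℕ × ℕ) : cInf k u v w = cInf k u w v := by
  rcases u with a | p <;> rcases v with b | q <;> rcases w with d | r <;>
    simp [cInf, gInf] <;>
  · refine if_congr ⟨?_, ?_⟩ rfl rfl <;> (rintro ⟨rfl, rfl⟩; exact ⟨rfl, rfl⟩)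

end CInfLemmas

section Gram

noncomputable def vbL (U : ℕ → (ℕ →₀ k)) (g : ℕ → k) : ℕ → List k
  | 0 => []
  | m+1 => vbL U g m ++
      [(g m - ∑ l ∈ Finset.range m, (vbL U g m).getD l 0 * U m (2*l)) / U m (2*m)]

noncomputable def vb (U : ℕ → (ℕ →₀ k)) (g : ℕ → k) (m : ℕ) : k :=
  (vbL U g (m+1)).getD m 0

theorem vbL_length (U : ℕ → (ℕ →₀ k)) (g : ℕ → k) (m : ℕ) :
    (vbL U g m).length = m := by
  induction m with
  | zero => rfl
  | succ m ih => simp [vbL, ih]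

theorem vbL_getD (U : ℕ → (ℕ →₀ k)) (g : ℕ → k) {l m : ℕ} (h : l < m) :
    (vbL U g m).getD l 0 = vb U g l := by
  induction m with
  | zero => omega
  | succ m ih =>
    rcases Nat.lt_succ_iff_lt_or_eq.1 h with h' | rfl
    · rw [vbL, List.getD_append _ _ _ _ (by rw [vbL_length]; exact h'), ih h']
    · rfl

theorem vb_eq (U : ℕ → (ℕ →₀ k)) (g : ℕ → k) (m : ℕ) :
    vb U g m = (g m - ∑ l ∈ Finset.range m, vb U g l * U m (2*l)) / U m (2*m) := by
  rw [vb, vbL, List.getD_append_right _ _ _ _ (by rw [vbL_length]),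
    vbL_length, Nat.sub_self]
  simp only [List.getD_cons_zero]
  congr 2
  exact Finset.sum_congr rfl fun l hl => by
    rw [vbL_getD U g (Finset.mem_range.1 hl)]

theorem vb_congr {U U' : ℕ → (ℕ →₀ k)} (g : ℕ → k) {m : ℕ}
    (h : ∀ l, l ≤ m → U l = U' l) : vb U g m = vb U' g m := by
  induction m using Nat.strong_induction_on with
  | _ m ih =>
    rw [vb_eq, vb_eq, h m le_rfl]
    congr 2
    exact Finset.sum_congr rfl fun l hl => by
      rw [ih l (Finset.mem_range.1 hl)
        (fun l' hl' => h l' (hl'.trans (le_of_lt (Finset.mem_range.1 hl))))]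

/-- the partial solution vector -/
noncomputable def bodyV (U : ℕ → (ℕ →₀ k)) (g : ℕ → k) (n : ℕ) : ℕ →₀ k :=
  ∑ m ∈ Finset.range n, Finsupp.single (2*m) (vb U g m)

noncomputable def bodyR (U : ℕ → (ℕ →₀ k)) (g : ℕ → k) (n : ℕ) : k :=
  g n - dotF (bodyV U g n) (bodyV U g n)

open scoped Classical in
noncomputable def bodyD1 (sq : k → k) (U : ℕ → (ℕ →₀ k)) (g : ℕ → k) (n : ℕ) : k :=
  if bodyR U g n = 0 then 1 else sq (bodyR U g n)

open scoped Classical in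
noncomputable def bodyD2 (I : k) (U : ℕ → (ℕ →₀ k)) (g : ℕ → k) (n : ℕ) : k :=
  if bodyR U g n = 0 then I else 0

noncomputable def body (I : k) (sq : k → k) (U : ℕ → (ℕ →₀ k)) (g : ℕ → k)
    (n : ℕ) : ℕ →₀ k :=
  bodyV U g n + Finsupp.single (2*n) (bodyD1 sq U g n)
    + Finsupp.single (2*n+1) (bodyD2 I U g n)

noncomputable def gramL (G : ℕ → ℕ → k) (I : k) (sq : k → k) : ℕ → List (ℕ →₀ k)
  | 0 => []
  | n+1 => gramL G I sq n ++
      [body I sq (fun m => (gramL G I sq n).getD m 0) (G n) n]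

noncomputable def gram (G : ℕ → ℕ → k) (I : k) (sq : k → k) (n : ℕ) : ℕ →₀ k :=
  (gramL G I sq (n+1)).getD n 0

theorem gramL_length (G : ℕ → ℕ → k) (I : k) (sq : k → k) (m : ℕ) :
    (gramL G I sq m).length = m := by
  induction m with
  | zero => rfl
  | succ m ih => simp [gramL, ih]

theorem gramL_getD (G : ℕ → ℕ → k) (I : k) (sq : k → k) {l m : ℕ} (h : l < m) :
    (gramL G I sq m).getD l 0 = gram G I sq l := by
  induction m with
  | zero => omega
  | succ m ih =>
    rcases Nat.lt_succ_iff_lt_or_eq.1 h with h' | rfl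
    · rw [gramL, List.getD_append _ _ _ _ (by rw [gramL_length]; exact h'), ih h']
    · rfl

theorem body_congr (I : k) (sq : k → k) {U U' : ℕ → (ℕ →₀ k)} (g : ℕ → k) (n : ℕ)
    (h : ∀ l, l < n → U l = U' l) : body I sq U g n = body I sq U' g n := by
  have hV : bodyV U g n = bodyV U' g n := by
    refine Finset.sum_congr rfl fun m hm => ?_
    rw [vb_congr g (fun l hl => h l (lt_of_le_of_lt hl (Finset.mem_range.1 hm)))]
  have hR : bodyR U g n = bodyR U' g n := by rw [bodyR, bodyR, hV]
  rw [body, body, hV, bodyD1, bodyD1, bodyD2, bodyD2, hR]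

theorem gram_eq (G : ℕ → ℕ → k) (I : k) (sq : k → k) (n : ℕ) :
    gram G I sq n = body I sq (gram G I sq) (G n) n := by
  show (gramL G I sq (n+1)).getD n 0 = _
  rw [gramL, List.getD_append_right _ _ _ _ (by rw [gramL_length]),
    gramL_length, Nat.sub_self]
  simp only [List.getD_cons_zero]
  exact body_congr I sq (G n) n fun l hl => gramL_getD G I sq hl


theorem bodyV_apply_even {U : ℕ → (ℕ →₀ k)} {g : ℕ → k} {n l : ℕ} (h : l < n) :
    bodyV U g n (2*l) = vb U g l := by
  rw [bodyV, Finsupp.finset_sum_apply]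
  rw [Finset.sum_congr rfl (fun m _ => Finsupp.single_apply),
    Finset.sum_congr rfl (fun m _ => if_congr (by omega : 2*m = 2*l ↔ m = l) rfl rfl),
    Finset.sum_ite_eq' (Finset.range n) l (fun m => vb U g m),
    if_pos (Finset.mem_range.2 h)]

theorem bodyV_apply_ne {U : ℕ → (ℕ →₀ k)} {g : ℕ → k} {n j : ℕ}
    (h : ∀ m, m < n → 2*m ≠ j) : bodyV U g n j = 0 := by
  rw [bodyV, Finsupp.finset_sum_apply]
  exact Finset.sum_eq_zero fun m hm =>
    Finsupp.single_apply_eq_zero.2 fun hj => absurd hj.symm (h m (Finset.mem_range.1 hm))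

theorem gram_apply_hi (G : ℕ → ℕ → k) (I : k) (sq : k → k) {n j : ℕ}
    (h : 2*n+2 ≤ j) : gram G I sq n j = 0 := by
  rw [gram_eq, body, Finsupp.add_apply, Finsupp.add_apply,
    bodyV_apply_ne (fun m hm => by omega),
    Finsupp.single_eq_of_ne' (by omega : 2*n ≠ j),
    Finsupp.single_eq_of_ne' (by omega : 2*n+1 ≠ j)]
  ring

theorem gram_pivot (G : ℕ → ℕ → k) (I : k) (sq : k → k) (n : ℕ) :
    gram G I sq n (2*n) = bodyD1 sq (gram G I sq) (G n) n := by
  rw [gram_eq, body, Finsupp.add_apply, Finsupp.add_apply,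
    bodyV_apply_ne (fun m hm => by omega),
    Finsupp.single_eq_same,
    Finsupp.single_eq_of_ne' (by omega : 2*n+1 ≠ 2*n)]
  ring

theorem gram_odd (G : ℕ → ℕ → k) (I : k) (sq : k → k) (n : ℕ) :
    gram G I sq n (2*n+1) = bodyD2 I (gram G I sq) (G n) n := by
  rw [gram_eq, body, Finsupp.add_apply, Finsupp.add_apply,
    bodyV_apply_ne (fun m hm => by omega),
    Finsupp.single_eq_of_ne' (by omega : 2*n ≠ 2*n+1),
    Finsupp.single_eq_same]
  ring

theorem gram_apply_even (G : ℕ → ℕ → k) (I : k) (sq : k → k) {m n : ℕ}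
    (h : m < n) : gram G I sq n (2*m) = vb (gram G I sq) (G n) m := by
  rw [gram_eq, body, Finsupp.add_apply, Finsupp.add_apply,
    bodyV_apply_even h,
    Finsupp.single_eq_of_ne' (by omega : 2*n ≠ 2*m),
    Finsupp.single_eq_of_ne' (by omega : 2*n+1 ≠ 2*m)]
  ring

theorem bodyD1_ne {sq : k → k} (hsq : ∀ r, sq r ^ 2 = r)
    (U : ℕ → (ℕ →₀ k)) (g : ℕ → k) (n : ℕ) : bodyD1 sq U g n ≠ 0 := by
  rw [bodyD1]
  split_ifs with h
  · exact one_ne_zero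
  · intro h0
    exact h (by rw [← hsq (bodyR U g n), h0]; ring)

theorem dotF_gram_left (G : ℕ → ℕ → k) (I : k) (sq : k → k) (n : ℕ) (y : ℕ →₀ k) :
    dotF (gram G I sq n) y =
      (∑ l ∈ Finset.range n, vb (gram G I sq) (G n) l * y (2*l))
        + bodyD1 sq (gram G I sq) (G n) n * y (2*n)
        + bodyD2 I (gram G I sq) (G n) n * y (2*n+1) := by
  rw [gram_eq, body, dotF_add_left, dotF_add_left, dotF_single, dotF_single,
    bodyV, dotF_sum_left]
  congr 1
  congr 1
  exact Finset.sum_congr rfl fun l _ => dotF_single _ _ _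

theorem dotF_bodyV_self (U : ℕ → (ℕ →₀ k)) (g : ℕ → k) (n : ℕ) :
    dotF (bodyV U g n) (bodyV U g n)
      = ∑ l ∈ Finset.range n, vb U g l * vb U g l := by
  rw [bodyV, dotF_sum_left]
  exact Finset.sum_congr rfl fun l hl => by
    rw [dotF_single, ← bodyV_apply_even (Finset.mem_range.1 hl), bodyV]

theorem dot_gram_lt (G : ℕ → ℕ → k) (I : k) {sq : k → k}
    (hsq : ∀ r, sq r ^ 2 = r) {m n : ℕ} (h : m < n) :
    dotF (gram G I sq n) (gram G I sq m) = G n m := by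
  rw [dotF_gram_left, gram_apply_hi G I sq (by omega),
    gram_apply_hi G I sq (by omega)]
  have hsum : ∑ l ∈ Finset.range n, vb (gram G I sq) (G n) l * gram G I sq m (2*l)
      = ∑ l ∈ Finset.range (m+1), vb (gram G I sq) (G n) l * gram G I sq m (2*l) :=
    (Finset.sum_subset (Finset.range_subset_range.2 h) (fun l _ hl => by
      rw [gram_apply_hi G I sq (by
        have hx : ¬ l < m + 1 := fun c => hl (Finset.mem_range.2 c)
        omega)]
      ring)).symm
  rw [hsum, Finset.sum_range_succ, vb_eq,
    div_mul_cancel₀ _ (by rw [gram_pivot]; exact bodyD1_ne hsq _ _ m)]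
  ring

theorem dot_gram_self (G : ℕ → ℕ → k) {I : k} {sq : k → k}
    (hI : I^2 = -1) (hsq : ∀ r, sq r ^ 2 = r) (n : ℕ) :
    dotF (gram G I sq n) (gram G I sq n) = G n n := by
  rw [dotF_gram_left, gram_pivot, gram_odd]
  have h1 : ∑ l ∈ Finset.range n, vb (gram G I sq) (G n) l * gram G I sq n (2*l)
      = ∑ l ∈ Finset.range n, vb (gram G I sq) (G n) l * vb (gram G I sq) (G n) l :=
    Finset.sum_congr rfl fun l hl => by
      rw [gram_apply_even G I sq (Finset.mem_range.1 hl)]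
  rw [h1]
  have h2 : bodyD1 sq (gram G I sq) (G n) n * bodyD1 sq (gram G I sq) (G n) n
        + bodyD2 I (gram G I sq) (G n) n * bodyD2 I (gram G I sq) (G n) n
      = bodyR (gram G I sq) (G n) n := by
    rw [bodyD1, bodyD2]
    split_ifs with h
    · rw [h]; linear_combination hI
    · linear_combination hsq (bodyR (gram G I sq) (G n) n)
  rw [add_assoc, h2, bodyR, dotF_bodyV_self]
  ring

theorem dot_gram (G : ℕ → ℕ → k) {I : k} {sq : k → k}
    (hG : ∀ p q, G p q = G q p) (hI : I^2 = -1) (hsq : ∀ r, sq r ^ 2 = r)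
    (n m : ℕ) : dotF (gram G I sq n) (gram G I sq m) = G n m := by
  rcases lt_trichotomy m n with h | rfl | h
  · exact dot_gram_lt G I hsq h
  · exact dot_gram_self G hI hsq m
  · rw [dotF_comm, dot_gram_lt G I hsq h, hG]

end Gram

section Assemble

/-- tie-breaking weight: fraction of the monomial assigned to the first index -/
noncomputable def mw (K : Type*) [Field K] (i b c : ℕ) : K :=
  if i < b ∧ i < c then 1
  else if i = b ∧ i < c then 2⁻¹
  else if i = c ∧ i < b then 2⁻¹
  else if i = b ∧ i = c then 3⁻¹
  else 0

theorem mw_symm (i b c : ℕ) : mw k i b c = mw k i c b := by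
  rw [mw, mw]
  split_ifs <;> first | rfl | (exfalso; omega)

theorem mw_eq_zero {i b c : ℕ} (h : b < i ∨ c < i) : mw k i b c = 0 := by
  rw [mw]
  split_ifs <;> first | rfl | (exfalso; omega)

set_option maxHeartbeats 2000000 in
theorem mw_sum (hk2 : (2:k) ≠ 0) (hk3 : (3:k) ≠ 0) (a b c : ℕ) :
    mw k a b c + mw k b a c + mw k c a b = 1 := by
  rw [mw, mw, mw]
  split_ifs <;>
    first
      | (exfalso; omega)
      | ring1
      | linear_combination mul_inv_cancel₀ hk2
      | linear_combination mul_inv_cancel₀ hk3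

noncomputable def grow (ccub : ℕ → ℕ → ℕ → k) (i b c : ℕ) : k :=
  3 * ccub i b c * mw k i b c

noncomputable def uvec (I : k) (sq : k → k) (ccub : ℕ → ℕ → ℕ → k) (i n : ℕ) :
    ℕ →₀ k :=
  if i ≤ n then gram (fun p q => grow ccub i (i+p) (i+q)) I sq (n - i) else 0

theorem uvec_eq_zero (I : k) (sq : k → k) (ccub : ℕ → ℕ → ℕ → k) {i n : ℕ}
    (h : n < i) : uvec I sq ccub i n = 0 := by
  rw [uvec, if_neg (by omega)]

theorem uvec_dot {I : k} {sq : k → k} (hI : I^2 = -1) (hsq : ∀ r, sq r ^ 2 = r)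
    {ccub : ℕ → ℕ → ℕ → k} (hc23 : ∀ u v w, ccub u v w = ccub u w v)
    (i b c : ℕ) :
    dotF (uvec I sq ccub i b) (uvec I sq ccub i c) = grow ccub i b c := by
  by_cases hib : i ≤ b
  · by_cases hic : i ≤ c
    · rw [uvec, uvec, if_pos hib, if_pos hic,
        dot_gram _ (fun p q => by rw [grow, grow, hc23, mw_symm]) hI hsq,
        Nat.add_sub_cancel' hib, Nat.add_sub_cancel' hic]
    · rw [uvec_eq_zero I sq ccub (by omega : c < i), dotF_zero_right, grow,
        mw_eq_zero (Or.inr (by omega)), mul_zero]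
  · rw [uvec_eq_zero I sq ccub (by omega : b < i), dotF_zero_left, grow,
      mw_eq_zero (Or.inl (by omega)), mul_zero]

/-- embedding of the `i`-th row of columns -/
def embR (i : ℕ) : ℕ ↪ (ℕ ⊕ ℕ × ℕ) :=
  ⟨fun j => Sum.inr (i, j), fun a b h => by simpa using h⟩

theorem embR_apply (i j : ℕ) : embR i j = Sum.inr (i, j) := rfl

/-- image of the `n`-th basis vector in `(ℕ ⊕ ℕ × ℕ) →₀ k` -/
noncomputable def gammaF (I : k) (sq : k → k) (ccub : ℕ → ℕ → ℕ → k) (n : ℕ) :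
    (ℕ ⊕ ℕ × ℕ) →₀ k :=
  Finsupp.single (Sum.inl n) 3⁻¹ +
    ∑ i ∈ Finset.range (n+1), Finsupp.embDomain (embR i) (uvec I sq ccub i n)

theorem T_ss (a b : ℕ) (r s : k) (z : (ℕ ⊕ ℕ × ℕ) →₀ k) :
    triBasis k (cInf k) (Finsupp.single (Sum.inl a) r)
      (Finsupp.single (Sum.inl b) s) z = 0 := by
  rw [triBasis_apply_superset (cInf k) Finsupp.support_single_subset
    Finsupp.support_single_subset (subset_refl z.support)]
  simp [cInf_inl_inl]

theorem T_EEE (i i' i'' : ℕ) (x y z : ℕ →₀ k) :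
    triBasis k (cInf k) (Finsupp.embDomain (embR i) x)
      (Finsupp.embDomain (embR i') y) (Finsupp.embDomain (embR i'') z) = 0 := by
  rw [triBasis_apply_superset (cInf k) (Finsupp.support_embDomain _ _).le
    (Finsupp.support_embDomain _ _).le (Finsupp.support_embDomain _ _).le]
  simp [Finset.sum_map, embR_apply, cInf_inr_inr_inr]

theorem T_sEE (a : ℕ) (r : k) (i i' : ℕ) (x y : ℕ →₀ k) :
    triBasis k (cInf k) (Finsupp.single (Sum.inl a) r)
      (Finsupp.embDomain (embR i) x) (Finsupp.embDomain (embR i') y)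
      = if i = a ∧ i' = a then r * dotF x y else 0 := by
  classical
  rw [triBasis_apply_superset (cInf k) Finsupp.support_single_subset
    (Finsupp.support_embDomain _ _).le (Finsupp.support_embDomain _ _).le]
  simp only [Finset.sum_singleton, Finset.sum_map, Finsupp.embDomain_apply_self,
    Finsupp.single_eq_same]
  simp only [embR_apply, cInf_inl_inr_inr, Prod.mk.injEq]
  by_cases h : i = a ∧ i' = a
  · obtain ⟨rfl, rfl⟩ := h
    rw [if_pos ⟨rfl, rfl⟩]
    simp only [eq_self_iff_true, true_and, and_true]
    have hterm2 : ∀ j j', r * (x j * (y j' * if j = j' then (1:k) else 0))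
        = if j' = j then r * (x j * y j') else 0 := by
      intro j j'
      by_cases hjj : j = j'
      · rw [if_pos hjj, if_pos hjj.symm, hjj]; ring
      · rw [if_neg hjj, if_neg (fun e => hjj e.symm)]; ring
    rw [Finset.sum_congr rfl fun j _ => Finset.sum_congr rfl fun j' _ => hterm2 j j']
    rw [Finset.sum_congr rfl fun j _ =>
      Finset.sum_ite_eq' y.support j (fun j' => r * (x j * y j'))]
    have hterm3 : ∀ j, (if j ∈ y.support then r * (x j * y j) else 0)
        = r * (x j * y j) := by
      intro j
      by_cases hj : j ∈ y.support
      · rw [if_pos hj]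
      · rw [if_neg hj, Finsupp.notMem_support_iff.1 hj, mul_zero, mul_zero]
    rw [Finset.sum_congr rfl fun j _ => hterm3 j, dotF, Finsupp.sum, Finset.mul_sum]
  · rw [if_neg h]
    refine Finset.sum_eq_zero fun j _ => Finset.sum_eq_zero fun j' _ => ?_
    rw [if_neg (fun hc => h ⟨hc.2, hc.1.1.symm.trans hc.2⟩)]
    ring

theorem T_sB {I : k} {sq : k → k} (hI : I^2 = -1) (hsq : ∀ r, sq r ^ 2 = r)
    {ccub : ℕ → ℕ → ℕ → k} (hc23 : ∀ u v w, ccub u v w = ccub u w v)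
    (a n n' : ℕ) :
    triBasis k (cInf k) (Finsupp.single (Sum.inl a) 3⁻¹)
      (∑ i ∈ Finset.range (n+1), Finsupp.embDomain (embR i) (uvec I sq ccub i n))
      (∑ i ∈ Finset.range (n'+1), Finsupp.embDomain (embR i) (uvec I sq ccub i n'))
      = 3⁻¹ * grow ccub a n n' := by
  classical
  simp only [map_sum, LinearMap.sum_apply, T_sEE]
  have hinner : ∀ i, (∑ i' ∈ Finset.range (n'+1), if i = a ∧ i' = a then
        (3⁻¹:k) * dotF (uvec I sq ccub i n) (uvec I sq ccub i' n') else 0)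
      = if i = a then (3⁻¹:k) * dotF (uvec I sq ccub i n) (uvec I sq ccub a n')
        else 0 := by
    intro i
    by_cases hia : i = a
    · subst hia
      simp only [eq_self_iff_true, true_and, if_pos]
      rw [Finset.sum_ite_eq' (Finset.range (n'+1)) i
        (fun i' => (3⁻¹:k) * dotF (uvec I sq ccub i n) (uvec I sq ccub i' n'))]
      by_cases ha' : i ∈ Finset.range (n'+1)
      · rw [if_pos ha']
      · rw [if_neg ha', uvec_eq_zero I sq ccub (show n' < i by
          have : ¬ i < n' + 1 := fun hlt => ha' (Finset.mem_range.2 hlt)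
          omega) (n := n'), dotF_zero_right, mul_zero]
    · rw [if_neg hia]
      exact Finset.sum_eq_zero fun i' _ => if_neg (fun hc => hia hc.1)
  rw [Finset.sum_comm, Finset.sum_congr rfl fun i _ => hinner i,
    Finset.sum_ite_eq' (Finset.range (n+1)) a
      (fun i => (3⁻¹:k) * dotF (uvec I sq ccub i n) (uvec I sq ccub a n'))]
  by_cases ha : a ∈ Finset.range (n+1)
  · rw [if_pos ha, uvec_dot hI hsq hc23]
  · have hna : n < a := by
      have : ¬ a < n + 1 := fun hlt => ha (Finset.mem_range.2 hlt)
      omega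
    rw [if_neg ha, grow, mw_eq_zero (Or.inl hna), mul_zero, mul_zero]

set_option maxHeartbeats 800000 in
theorem coreT {I : k} {sq : k → k} (hk2 : (2:k) ≠ 0) (hk3 : (3:k) ≠ 0)
    (hI : I^2 = -1) (hsq : ∀ r, sq r ^ 2 = r) {ccub : ℕ → ℕ → ℕ → k}
    (hc12 : ∀ u v w, ccub u v w = ccub v u w)
    (hc23 : ∀ u v w, ccub u v w = ccub u w v) (a b c : ℕ) :
    triBasis k (cInf k) (gammaF I sq ccub a) (gammaF I sq ccub b)
      (gammaF I sq ccub c) = ccub a b c := by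
  have hsw12 := triBasis_swap12 (c := cInf k) (fun u v w => cInf_swap12 u v w)
  have hsw23 := triBasis_swap23 (c := cInf k) (fun u v w => cInf_swap23 u v w)
  simp only [gammaF]
  set sa := Finsupp.single (Sum.inl a) (3⁻¹:k) with hsa
  set sb := Finsupp.single (Sum.inl b) (3⁻¹:k) with hsb
  set sc := Finsupp.single (Sum.inl c) (3⁻¹:k) with hsc
  set Ba := ∑ i ∈ Finset.range (a+1), Finsupp.embDomain (embR i) (uvec I sq ccub i a) with hBa
  set Bb := ∑ i ∈ Finset.range (b+1), Finsupp.embDomain (embR i) (uvec I sq ccub i b) with hBb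
  set Bc := ∑ i ∈ Finset.range (c+1), Finsupp.embDomain (embR i) (uvec I sq ccub i c) with hBc
  have e1 : triBasis k (cInf k) sa sb sc = 0 := T_ss a b 3⁻¹ 3⁻¹ sc
  have e2 : triBasis k (cInf k) sa sb Bc = 0 := T_ss a b 3⁻¹ 3⁻¹ Bc
  have e3 : triBasis k (cInf k) sa Bb sc = 0 := by
    rw [hsw23]; exact T_ss a c 3⁻¹ 3⁻¹ Bb
  have e4 : triBasis k (cInf k) sa Bb Bc = 3⁻¹ * grow ccub a b c := by
    rw [hsa, hBb, hBc]; exact T_sB hI hsq hc23 a b c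
  have e5 : triBasis k (cInf k) Ba sb sc = 0 := by
    rw [hsw12, hsw23]; exact T_ss b c 3⁻¹ 3⁻¹ Ba
  have e6 : triBasis k (cInf k) Ba sb Bc = 3⁻¹ * grow ccub b a c := by
    rw [hsw12, hsb, hBa, hBc]; exact T_sB hI hsq hc23 b a c
  have e7 : triBasis k (cInf k) Ba Bb sc = 3⁻¹ * grow ccub c a b := by
    rw [hsw23, hsw12, hsc, hBa, hBb]; exact T_sB hI hsq hc23 c a b
  have e8 : triBasis k (cInf k) Ba Bb Bc = 0 := by
    rw [hBa, hBb, hBc]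
    simp only [map_sum, LinearMap.sum_apply, T_EEE, Finset.sum_const_zero]
  simp only [map_add, LinearMap.add_apply, e1, e2, e3, e4, e5, e6, e7, e8]
  have hba : ccub b a c = ccub a b c := (hc12 a b c).symm
  have hca : ccub c a b = ccub a b c := by rw [hc12 c a b, hc23 a c b]
  have hmw := mw_sum hk2 hk3 a b c
  rw [grow, grow, grow, hba, hca]
  linear_combination (3⁻¹ * 3 * ccub a b c) * hmw
    + (ccub a b c) * mul_inv_cancel₀ hk3

theorem tri_ext {ι : Type*} {T T' : (ι →₀ k) →ₗ[k] (ι →₀ k) →ₗ[k] (ι →₀ k) →ₗ[k] k}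
    (h : ∀ a b c, T (Finsupp.single a 1) (Finsupp.single b 1) (Finsupp.single c 1)
      = T' (Finsupp.single a 1) (Finsupp.single b 1) (Finsupp.single c 1)) :
    T = T' := by
  refine Finsupp.lhom_ext fun a r => ?_
  refine Finsupp.lhom_ext fun b s => ?_
  refine Finsupp.lhom_ext fun c t => ?_
  have ha : Finsupp.single a r = r • Finsupp.single a (1:k) := by
    rw [Finsupp.smul_single, smul_eq_mul, mul_one]
  have hb : Finsupp.single b s = s • Finsupp.single b (1:k) := by
    rw [Finsupp.smul_single, smul_eq_mul, mul_one]
  have hc : Finsupp.single c t = t • Finsupp.single c (1:k) := by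
    rw [Finsupp.smul_single, smul_eq_mul, mul_one]
  rw [ha, hb, hc]
  simp only [map_smul, LinearMap.smul_apply]
  rw [h]

end Assemble

theorem comp3_apply {A B : Type*} [AddCommGroup A] [Module k A]
    [AddCommGroup B] [Module k B] (T : B →ₗ[k] B →ₗ[k] B →ₗ[k] k)
    (f : A →ₗ[k] B) (x y z : A) : comp3 T f x y z = T (f x) (f y) (f z) := rfl


end Aux

/-- Lemma 4.3 of the paper. Every cubic space of countable dimension
embeds into the cubic space `V(∞)`. -/
theorem cubic_embedding_into_VInf
    {k W : Type*} [Field k] [IsAlgClosed k]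
    (hk2 : (2 : k) ≠ 0) (hk3 : (3 : k) ≠ 0)
    [AddCommGroup W] [Module k W]
    (S : W →ₗ[k] W →ₗ[k] W →ₗ[k] k)
    (hS1 : ∀ x y z, S x y z = S y x z) (hS2 : ∀ x y z, S x y z = S x z y)
    (hW : Module.rank k W ≤ Cardinal.aleph0) :
    ∃ φ : W →ₗ[k] VInf k, ∀ x y z, TInf k (φ x) (φ y) (φ z) = S x y z := by
  classical
  obtain ⟨I, hI⟩ := IsAlgClosed.exists_pow_nat_eq (-1 : k) (n := 2) (by norm_num)
  have hsq' : ∀ r : k, ∃ s, s ^ 2 = r := fun r =>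
    IsAlgClosed.exists_pow_nat_eq r (by norm_num)
  choose sq hsq using hsq'
  set ι := Module.Basis.ofVectorSpaceIndex k W with hι
  set bV : Module.Basis ι k W := Module.Basis.ofVectorSpace k W with hbV
  have hcount : Countable ι := by
    rw [← Cardinal.mk_le_aleph0_iff, bV.mk_eq_rank'']
    exact hW
  haveI := hcount
  obtain ⟨f, hf⟩ := exists_injective_nat ι
  set g : ℕ → W := fun m => if h : ∃ i : ι, f i = m then bV h.choose else 0 with hg
  have hgf : ∀ i : ι, g (f i) = bV i := by
    intro i
    have hex : ∃ i' : ι, f i' = f i := ⟨i, rfl⟩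
    simp only [hg, dif_pos hex]
    exact congrArg bV (hf hex.choose_spec)
  set ccub : ℕ → ℕ → ℕ → k := fun u v w => S (g u) (g v) (g w) with hccub
  have hc12 : ∀ u v w, ccub u v w = ccub v u w := fun u v w => hS1 _ _ _
  have hc23 : ∀ u v w, ccub u v w = ccub u w v := fun u v w => hS2 _ _ _
  set Γ : (ℕ →₀ k) →ₗ[k] ((ℕ ⊕ ℕ × ℕ) →₀ k) :=
    Finsupp.lsum k (fun n => LinearMap.toSpanSingleton k _ (gammaF I sq ccub n))
    with hΓdef
  set ψ : W →ₗ[k] (ℕ →₀ k) :=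
    (Finsupp.lmapDomain k k f).comp bV.repr.toLinearMap with hψdef
  refine ⟨(Finsupp.sumFinsuppLEquivProdFinsupp k).toLinearMap.comp (Γ.comp ψ),
    fun x y z => ?_⟩
  have heq : ∀ w : W,
      eInf k ((Finsupp.sumFinsuppLEquivProdFinsupp k).toLinearMap.comp (Γ.comp ψ) w)
        = Γ (ψ w) := by
    intro w
    show (Finsupp.sumFinsuppLEquivProdFinsupp k).symm
      ((Finsupp.sumFinsuppLEquivProdFinsupp k) (Γ (ψ w))) = Γ (ψ w)
    exact LinearEquiv.symm_apply_apply _ _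
  have hTI : TInf k
      ((Finsupp.sumFinsuppLEquivProdFinsupp k).toLinearMap.comp (Γ.comp ψ) x)
      ((Finsupp.sumFinsuppLEquivProdFinsupp k).toLinearMap.comp (Γ.comp ψ) y)
      ((Finsupp.sumFinsuppLEquivProdFinsupp k).toLinearMap.comp (Γ.comp ψ) z)
      = triBasis k (cInf k) (Γ (ψ x)) (Γ (ψ y)) (Γ (ψ z)) := by
    rw [show ∀ A B C : VInf k, TInf k A B C
        = triBasis k (cInf k) (eInf k A) (eInf k B) (eInf k C)
      from fun A B C => rfl, heq x, heq y, heq z]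
  rw [hTI]
  have key : comp3 (triBasis k (cInf k)) (Γ.comp ψ) = S := by
    refine bV.ext fun i => ?_
    refine bV.ext fun j => ?_
    refine bV.ext fun l => ?_
    have hψ : ∀ i : ι, ψ (bV i) = Finsupp.single (f i) 1 := by
      intro i
      simp only [hψdef, LinearMap.comp_apply, LinearEquiv.coe_coe,
        Module.Basis.repr_self, Finsupp.lmapDomain_apply, Finsupp.mapDomain_single]
    have hΓ1 : ∀ m : ℕ, Γ (Finsupp.single m 1) = gammaF I sq ccub m := fun m => by
      rw [hΓdef, Finsupp.lsum_single, LinearMap.toSpanSingleton_apply, one_smul]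
    have hcomp : ∀ w : W, (Γ.comp ψ) w = Γ (ψ w) := fun w => rfl
    rw [comp3_apply, hcomp, hcomp, hcomp, hψ i, hψ j, hψ l, hΓ1, hΓ1, hΓ1,
      coreT hk2 hk3 hI hsq hc12 hc23]
    show S (g (f i)) (g (f j)) (g (f l)) = S (bV i) (bV j) (bV l)
    rw [hgf i, hgf j, hgf l]
  have hfin : triBasis k (cInf k) (Γ (ψ x)) (Γ (ψ y)) (Γ (ψ z))
      = comp3 (triBasis k (cInf k)) (Γ.comp ψ) x y z := rfl
  rw [hfin, key]
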